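/- Let G be a finite connected loopless multigraph with vertex set V and Laplacian Q(G). If D and D' are equivalent effective divisors on G with D ≠ D', then there exists a chain of vertex subsets ∅ ⊊ U₁ ⊆ U₂ ⊆ ⋯ ⊆ U_k ⊊ V such that for every t with 1 ≤ t ≤ k, the divisor D_t := D − Q(G)·(𝟙_{U₁} + ⋯ + 𝟙_{U_t}) is effective, and D_k = D'. -/

import Mathlib

open Finset
open scoped Classical

variable {V : Type*}

/-- Laplacian of the multigraph with edge multiplicity function `m`, applied to `x`. -/
def lap [Fintype V] (m : V → V → ℕ) (x : V → ℤ) : V → ℤ :=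
  fun u => (∑ w, (m u w : ℤ)) * x u - ∑ w, (m u w : ℤ) * x w

/-- A divisor is effective if it is nonnegative. -/
def Effective (D : V → ℤ) : Prop := ∀ v, 0 ≤ D v

/-- Linear equivalence of divisors. -/
def DivEquiv [Fintype V] (m : V → V → ℕ) (D D' : V → ℤ) : Prop :=
  ∃ x : V → ℤ, D - D' = lap m x

/-- Degree of a divisor. -/
def divDeg [Fintype V] (D : V → ℤ) : ℤ := ∑ v, D v

/-- Indicator vector of a subset. -/
def indVec [DecidableEq V] (U : Finset V) : V → ℤ := fun v => if v ∈ U then 1 else 0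

/-- The underlying graph of the multigraph is connected. -/
def Conn [Fintype V] (m : V → V → ℕ) : Prop :=
  (SimpleGraph.fromRel fun u v => m u v ≠ 0).Connected

/-- The equivalence relation `≡_D` on vertices. -/
def DEquiv [Fintype V] (m : V → V → ℕ) (D : V → ℤ) (u v : V) : Prop :=
  ∀ x : V → ℤ, Effective (D - lap m x) → x u = x v

/-- Rank of a divisor. -/
noncomputable def divRank [Fintype V] (m : V → V → ℕ) (D : V → ℤ) : ℤ :=
  if ∃ D' : V → ℤ, DivEquiv m D D' ∧ Effective D' then
    sSup {k : ℤ | 0 ≤ k ∧ ∀ E : V → ℤ, Effective E → divDeg E ≤ k →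
      ∃ D' : V → ℤ, DivEquiv m (D - E) D' ∧ Effective D'}
  else -1

/-- Gonality of the multigraph. -/
noncomputable def dgon (V : Type*) [Fintype V] (m : V → V → ℕ) : ℤ :=
  sInf {d : ℤ | ∃ D : V → ℤ, 1 ≤ divRank m D ∧ divDeg D = d}

lemma lap_sum_form [Fintype V] (m : V → V → ℕ) (x : V → ℤ) (u : V) :
    lap m x u = ∑ w, (m u w : ℤ) * (x u - x w) := by
  rw [lap, Finset.sum_mul, ← Finset.sum_sub_distrib]
  exact Finset.sum_congr rfl fun w _ => by ring

lemma lap_shift [Fintype V] (m : V → V → ℕ) (x : V → ℤ) (c : ℤ) :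
    lap m (fun v => x v - c) = lap m x := by
  funext u
  rw [lap_sum_form, lap_sum_form]
  exact Finset.sum_congr rfl fun w _ => by ring

lemma sum_count (k tv : ℕ) (M xv : ℤ) (hM : xv ≤ M) (hkM : (k:ℤ) = M)
    (htk : tv < k) :
    ∑ i ∈ Finset.range k, (if (i ≤ tv ∧ M - (i:ℤ) ≤ xv) then (1:ℤ) else 0)
      = max 0 (xv - (M - (tv:ℤ) - 1)) := by
  set a := (M - xv).toNat with ha'
  have ha : (a:ℤ) = M - xv := Int.toNat_of_nonneg (by linarith)
  have hfilt : (Finset.range k).filter (fun i => i ≤ tv ∧ M - (i:ℤ) ≤ xv)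
      = Finset.Icc a tv := by
    ext i; simp only [Finset.mem_filter, Finset.mem_range, Finset.mem_Icc]; omega
  rw [Finset.sum_boole, hfilt, Nat.card_Icc]
  rcases le_total (xv - (M - (tv:ℤ) - 1)) 0 with h | h
  · rw [max_eq_left h]
    have : tv + 1 - a = 0 := by omega
    rw [this]; simp
  · rw [max_eq_right h]
    have hle : a ≤ tv + 1 := by omega
    push_cast [Nat.cast_sub hle]
    omega

lemma eff_trunc [Fintype V] (m : V → V → ℕ) (D x : V → ℤ) (c : ℤ)
    (hD : Effective D) (hDx : Effective (D - lap m x)) :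
    Effective (D - lap m (fun v => max 0 (x v - c))) := by
  intro v
  simp only [Pi.sub_apply]
  rw [lap_sum_form]
  by_cases h : x v ≤ c
  · have hle : ∑ w, (m v w:ℤ) * (max 0 (x v - c) - max 0 (x w - c)) ≤ 0 := by
      apply Finset.sum_nonpos
      intro w _
      apply mul_nonpos_of_nonneg_of_nonpos (by positivity)
      have h1 : max 0 (x v - c) = 0 := max_eq_left (by linarith)
      have h2 : (0:ℤ) ≤ max 0 (x w - c) := le_max_left _ _
      linarith
    linarith [hD v]
  · have hv := hDx v
    simp only [Pi.sub_apply] at hv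
    rw [lap_sum_form] at hv
    have hle : ∑ w, (m v w:ℤ) * (max 0 (x v - c) - max 0 (x w - c))
        ≤ ∑ w, (m v w:ℤ) * (x v - x w) := by
      apply Finset.sum_le_sum
      intro w _
      apply mul_le_mul_of_nonneg_left _ (by positivity)
      have h1 : max 0 (x v - c) = x v - c := max_eq_right (by linarith)
      have h2 : x w - c ≤ max 0 (x w - c) := le_max_right _ _
      linarith
    linarith

/-- Lemma 1 (chain of firing sets): if `D` and `D'` are equivalent effective divisors with
`D ≠ D'`, there is a chain `∅ ⊊ U₁ ⊆ ⋯ ⊆ U_k ⊊ V` such that each partial firing keeps the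
divisor effective and the final result is `D'`. -/
theorem chain_of_firing_sets [Fintype V] [DecidableEq V] (m : V → V → ℕ)
    (hsymm : ∀ u v, m u v = m v u) (hloop : ∀ v, m v v = 0) (hconn : Conn m)
    (D D' : V → ℤ) (hD : Effective D) (hD' : Effective D')
    (hequiv : DivEquiv m D D') (hne : D ≠ D') :
    ∃ (k : ℕ) (hk : 0 < k) (U : Fin k → Finset V),
      Monotone U ∧
      (U ⟨0, hk⟩).Nonempty ∧
      U ⟨k - 1, Nat.sub_lt hk one_pos⟩ ≠ Finset.univ ∧
      (∀ t : Fin k, Effective (D - lap m (∑ i ∈ Finset.Iic t, indVec (U i)))) ∧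
      D - lap m (∑ i : Fin k, indVec (U i)) = D' := by
  obtain ⟨x₀, hx₀⟩ := hequiv
  have hVne : Nonempty V := by
    by_contra h
    exact hne (funext fun v => (h ⟨v⟩).elim)
  have hune : (Finset.univ : Finset V).Nonempty := Finset.univ_nonempty
  set c : ℤ := Finset.univ.inf' hune x₀ with hc
  set x : V → ℤ := fun v => x₀ v - c with hxdef
  have hDD' : D - D' = lap m x := by rw [hxdef, lap_shift]; exact hx₀
  have hE : D - lap m x = D' := by rw [← hDD', sub_sub_cancel]
  have hx0 : ∀ v, 0 ≤ x v := fun v =>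
    sub_nonneg.2 (Finset.inf'_le _ (Finset.mem_univ v))
  obtain ⟨v0, -, hv0⟩ := Finset.exists_mem_eq_inf' hune x₀
  have hxv0 : x v0 = 0 := by rw [hxdef]; simp [hc, ← hv0]
  set M : ℤ := Finset.univ.sup' hune x with hMdef
  have hxM : ∀ v, x v ≤ M := fun v => Finset.le_sup' _ (Finset.mem_univ v)
  obtain ⟨vM, -, hvM⟩ := Finset.exists_mem_eq_sup' hune x
  have hM0 : 0 ≤ M := by rw [hMdef, hvM]; exact hx0 vM
  have hMpos : 0 < M := by
    by_contra h
    push_neg at h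
    have hxz : ∀ v, x v = 0 := fun v => le_antisymm ((hxM v).trans h) (hx0 v)
    apply hne
    have hz : lap m x = 0 := by
      funext u
      rw [lap_sum_form]
      simp [hxz]
    have h0 : D - D' = 0 := by rw [hDD', hz]
    exact sub_eq_zero.mp h0
  set k := M.toNat with hkdef
  have hkM : (k:ℤ) = M := Int.toNat_of_nonneg hM0
  have hk : 0 < k := by omega
  set U : Fin k → Finset V :=
    fun i => Finset.univ.filter (fun v => M - ((i:ℕ):ℤ) ≤ x v) with hUdef
  have hsum : ∀ t : Fin k, ∀ v,
      (∑ i ∈ Finset.Iic t, indVec (U i)) v = max 0 (x v - (M - ((t:ℕ):ℤ) - 1)) := by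
    intro t v
    rw [Finset.sum_apply]
    simp only [hUdef, indVec, Finset.mem_filter, Finset.mem_univ, true_and]
    have hIic : Finset.Iic t = Finset.univ.filter (fun i : Fin k => i ≤ t) := by
      ext i; simp
    rw [hIic, Finset.sum_filter]
    have hcongr : ∀ i : Fin k,
        (if i ≤ t then (if M - ((i:ℕ):ℤ) ≤ x v then (1:ℤ) else 0) else 0)
        = (if ((i:ℕ) ≤ (t:ℕ) ∧ M - ((i:ℕ):ℤ) ≤ x v) then (1:ℤ) else 0) := by
      intro i
      by_cases h1 : i ≤ t
      · have h1' : (i:ℕ) ≤ (t:ℕ) := h1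
        simp [h1, h1']
      · have h1' : ¬ (i:ℕ) ≤ (t:ℕ) := h1
        simp [h1, h1']
    rw [Finset.sum_congr rfl (fun i _ => hcongr i)]
    rw [Fin.sum_univ_eq_sum_range
      (fun n => if (n ≤ (t:ℕ) ∧ M - (n:ℤ) ≤ x v) then (1:ℤ) else 0)]
    exact sum_count k t M (x v) (hxM v) hkM t.isLt
  refine ⟨k, hk, U, ?_, ?_, ?_, ?_, ?_⟩
  · intro i j hij v hv
    simp only [hUdef, Finset.mem_filter, Finset.mem_univ, true_and] at hv ⊢
    have h1 : ((i:ℕ):ℤ) ≤ ((j:ℕ):ℤ) := by exact_mod_cast (hij : (i:ℕ) ≤ (j:ℕ))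
    linarith
  · refine ⟨vM, ?_⟩
    simp only [hUdef, Finset.mem_filter, Finset.mem_univ, true_and]
    rw [← hvM]
    simp
    exact ⟨vM, hvM.le⟩
  · intro hU
    have hv0mem : v0 ∈ U ⟨k - 1, Nat.sub_lt hk one_pos⟩ := hU ▸ Finset.mem_univ v0
    simp only [hUdef, Finset.mem_filter, Finset.mem_univ, true_and] at hv0mem
    rw [hxv0] at hv0mem
    omega
  · intro t
    have heq : (∑ i ∈ Finset.Iic t, indVec (U i))
        = fun v => max 0 (x v - (M - ((t:ℕ):ℤ) - 1)) := funext (hsum t)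
    rw [heq]
    exact eff_trunc m D x _ hD (hE ▸ hD')
  · have hlast : (Finset.univ : Finset (Fin k))
        = Finset.Iic (⟨k - 1, Nat.sub_lt hk one_pos⟩ : Fin k) := by
      ext i; simp only [Finset.mem_univ, Finset.mem_Iic, Fin.le_def, true_iff]
      omega
    rw [hlast]
    have heq : (∑ i ∈ Finset.Iic (⟨k - 1, Nat.sub_lt hk one_pos⟩ : Fin k), indVec (U i))
        = fun v => max 0 (x v - (M - ((k - 1 : ℕ):ℤ) - 1)) :=
      funext (hsum ⟨k - 1, Nat.sub_lt hk one_pos⟩)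
    rw [heq]
    have hxeq : (fun v => max 0 (x v - (M - ((k - 1 : ℕ):ℤ) - 1))) = x := by
      funext v
      have h1 : M - ((k - 1 : ℕ):ℤ) - 1 = 0 := by omega
      rw [h1, sub_zero, max_eq_right (hx0 v)]
    rw [hxeq]
    exact hE
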